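/- Let p be an odd prime number and let G be the group Φ_6(221)a of order p^5, generated by f1, f2, f0, h1, h2 with Z(G) = ⟨h1, h2⟩ and relations [f1,f2] = f0, [f0,f1] = h1, [f0,f2] = h2, f0^p = h1^p = h2^p = 1, f1^p = h1, f2^p = h2. Then B_0(G) = 0. -/

import Mathlib

/-- The coefficient group `ℚ/ℤ`. -/
abbrev QZ : Type := ℚ ⧸ AddSubgroup.zmultiples (1 : ℚ)

/-- A (inhomogeneous) 2-cocycle on `G` with values in `ℚ/ℤ` (trivial action). -/
def IsGrpCocycle {G : Type*} [Group G] (f : G → G → QZ) : Prop :=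
  ∀ g h k : G, f g h + f (g * h) k = f h k + f g (h * k)

/-- A 2-coboundary on `G` with values in `ℚ/ℤ` (trivial action). -/
def IsGrpCoboundary {G : Type*} [Group G] (f : G → G → QZ) : Prop :=
  ∃ c : G → QZ, ∀ g h : G, f g h = c g + c h - c (g * h)

/-- The additive group of 2-cocycles. -/
def cocycles2 (G : Type*) [Group G] : AddSubgroup (G → G → QZ) where
  carrier := {f | IsGrpCocycle f}
  zero_mem' := by intro g h k; simp
  add_mem' := by
    intro a b ha hb g h k
    simp only [Pi.add_apply]
    rw [add_add_add_comm, ha g h k, hb g h k, add_add_add_comm]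
  neg_mem' := by
    intro a ha g h k
    simp only [Pi.neg_apply, ← neg_add]
    rw [ha g h k]

/-- The subgroup of 2-coboundaries inside the group of 2-cocycles. -/
def coboundaries2 (G : Type*) [Group G] : AddSubgroup (cocycles2 G) where
  carrier := {f | IsGrpCoboundary (f : G → G → QZ)}
  zero_mem' := ⟨0, by intro g h; simp⟩
  add_mem' := by
    rintro a b ⟨c, hc⟩ ⟨d, hd⟩
    refine ⟨c + d, fun g h => ?_⟩
    have : ((a + b : cocycles2 G) : G → G → QZ) g h
        = (a : G → G → QZ) g h + (b : G → G → QZ) g h := rfl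
    rw [this, hc g h, hd g h]
    simp only [Pi.add_apply]
    abel
  neg_mem' := by
    rintro a ⟨c, hc⟩
    refine ⟨-c, fun g h => ?_⟩
    have : ((-a : cocycles2 G) : G → G → QZ) g h = -((a : G → G → QZ) g h) := rfl
    rw [this, hc g h]
    simp only [Pi.neg_apply]
    abel

/-- The second cohomology group `H²(G, ℚ/ℤ)` (trivial action), as cocycles mod coboundaries. -/
abbrev H2 (G : Type*) [Group G] : Type _ := cocycles2 G ⧸ coboundaries2 G

/-- A group is bicyclic if it is cyclic or the direct product of two cyclic groups. -/
def IsBicyclic (A : Type*) [Group A] : Prop :=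
  IsCyclic A ∨ ∃ B C : Subgroup A, IsCyclic B ∧ IsCyclic C ∧ Nonempty (A ≃* B × C)

/-- The restriction of `f` to every bicyclic subgroup is a coboundary. -/
def RestrictsToCoboundaries {G : Type*} [Group G] (f : G → G → QZ) : Prop :=
  ∀ A : Subgroup G, IsBicyclic A → IsGrpCoboundary (fun a b : A => f a b)

/-- The Bogomolov multiplier `B₀(G)`: the subgroup of `H²(G, ℚ/ℤ)` consisting of the classes
whose restriction to every bicyclic subgroup of `G` vanishes. -/
def B0 (G : Type*) [Group G] : AddSubgroup (H2 G) where
  carrier := {x | ∃ f : cocycles2 G,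
    (QuotientAddGroup.mk f : H2 G) = x ∧ RestrictsToCoboundaries (f : G → G → QZ)}
  zero_mem' := by
    refine ⟨0, rfl, fun A _ => ⟨0, fun a b => ?_⟩⟩
    simp
  add_mem' := by
    rintro x y ⟨f, rfl, hf⟩ ⟨g, rfl, hg⟩
    refine ⟨f + g, rfl, fun A hA => ?_⟩
    obtain ⟨c, hc⟩ := hf A hA
    obtain ⟨d, hd⟩ := hg A hA
    refine ⟨c + d, fun a b => ?_⟩
    have hc' : (f : G → G → QZ) (a : G) (b : G) = c a + c b - c (a * b) := hc a b
    have hd' : (g : G → G → QZ) (a : G) (b : G) = d a + d b - d (a * b) := hd a b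
    show ((f + g : cocycles2 G) : G → G → QZ) (a : G) (b : G)
        = (c + d) a + (c + d) b - (c + d) (a * b)
    have : ((f + g : cocycles2 G) : G → G → QZ) (a : G) (b : G)
        = (f : G → G → QZ) (a : G) (b : G) + (g : G → G → QZ) (a : G) (b : G) := rfl
    rw [this, hc', hd']
    simp only [Pi.add_apply]
    abel
  neg_mem' := by
    rintro x ⟨f, rfl, hf⟩
    refine ⟨-f, rfl, fun A hA => ?_⟩
    obtain ⟨c, hc⟩ := hf A hA
    refine ⟨-c, fun a b => ?_⟩
    have hc' : (f : G → G → QZ) (a : G) (b : G) = c a + c b - c (a * b) := hc a b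
    show ((-f : cocycles2 G) : G → G → QZ) (a : G) (b : G)
        = (-c) a + (-c) b - (-c) (a * b)
    have : ((-f : cocycles2 G) : G → G → QZ) (a : G) (b : G)
        = -((f : G → G → QZ) (a : G) (b : G)) := rfl
    rw [this, hc']
    simp only [Pi.neg_apply]
    abel

/-- The commutator `[g,h] = g⁻¹h⁻¹gh`. -/
def cmt {G : Type*} [Group G] (g h : G) : G := g⁻¹ * h⁻¹ * g * h


section CmtLemmas
variable {K : Type*} [Group K]

lemma cmt_mul_left (u v b : K) : cmt (u * v) b = v⁻¹ * cmt u b * v * cmt v b := by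
  simp only [cmt]; group

lemma cmt_mul_right (a u v : K) : cmt a (u * v) = cmt a v * (v⁻¹ * cmt a u * v) := by
  simp only [cmt]; group

lemma cmt_swap (a b : K) : cmt b a = (cmt a b)⁻¹ := by simp only [cmt]; group

lemma mul_eq_of_cmt (a b : K) : a * b = b * a * cmt a b := by simp only [cmt]; group

lemma cmt_central_right (a z : K) (hz : ∀ k, Commute z k) : cmt a z = 1 := by
  have h1 : z⁻¹ * a = a * z⁻¹ := ((hz a).inv_left).eq
  simp only [cmt]
  rw [mul_assoc a⁻¹, h1]; group

lemma cmt_central_left (z b : K) (hz : ∀ k, Commute z k) : cmt z b = 1 := by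
  rw [cmt_swap, cmt_central_right _ _ hz, inv_one]

lemma cmt_inv_left (a b c : K) (h : cmt a b = c) (hc : ∀ k, Commute c k) :
    cmt a⁻¹ b = c⁻¹ := by
  have h2 : cmt a⁻¹ b = a * (cmt a b)⁻¹ * a⁻¹ := by simp only [cmt]; group
  rw [h2, h]
  have h3 : a * c⁻¹ = c⁻¹ * a := ((hc a).inv_left).eq.symm
  rw [h3, mul_assoc, mul_inv_cancel, mul_one]

lemma conj_eq_cmt (c v : K) : v⁻¹ * c * v = c * cmt c v := by simp only [cmt]; group

lemma cmt_pow_right (c a h : K) (hca : cmt c a = h) (hh : ∀ k, Commute h k) :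
    ∀ n : ℕ, cmt c (a ^ n) = h ^ n := by
  intro n
  induction n with
  | zero => simp [cmt]
  | succ n ih =>
      rw [pow_succ, cmt_mul_right, ih, hca]
      have h1 : a⁻¹ * (h ^ n * a) = h ^ n := by
        rw [((hh a).pow_left n).eq, ← mul_assoc, inv_mul_cancel, one_mul]
      rw [mul_assoc a⁻¹, h1, pow_succ']

lemma cmt_pow_left (a b c h : K) (hab : cmt a b = c) (hca : cmt c a = h)
    (hh : ∀ k, Commute h k) :
    ∀ n : ℕ, cmt (a ^ n) b = c ^ n * h ^ n.choose 2 := by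
  intro n
  induction n with
  | zero => simp [cmt]
  | succ n ih =>
      rw [pow_succ', cmt_mul_left, ih, hab]
      have hconj : (a ^ n)⁻¹ * c * a ^ n = c * h ^ n := by
        rw [conj_eq_cmt, cmt_pow_right c a h hca hh n]
      rw [hconj]
      have h2 : h ^ n * c ^ n = c ^ n * h ^ n := ((hh (c ^ n)).pow_left n).eq
      calc c * h ^ n * (c ^ n * h ^ n.choose 2)
          = c * (h ^ n * c ^ n) * h ^ n.choose 2 := by group
        _ = c * (c ^ n * h ^ n) * h ^ n.choose 2 := by rw [h2]
        _ = (c * c ^ n) * (h ^ n * h ^ n.choose 2) := by group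
        _ = c ^ (n + 1) * h ^ ((n + 1).choose 2) := by
            rw [← pow_succ', ← pow_add]
            congr 1
            rw [Nat.choose_succ_succ, Nat.choose_one_right]
end CmtLemmas

section Collect
variable {K : Type*} [Group K]

abbrev NV : Type := ℕ × ℕ × ℕ × ℕ × ℕ

def redV (p : ℕ) (v : NV) : NV :=
  (v.1 % p, v.2.1 % p, v.2.2.1 % p, (v.2.2.2.1 + v.1 / p) % p, (v.2.2.2.2 + v.2.1 / p) % p)

def rX (p : ℕ) (v : NV) : NV :=
  redV p (v.1 + 1, v.2.1, (p - 1) * v.2.1 + v.2.2.1, v.2.2.1 + v.2.2.2.1,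
    (p - 1) * (v.2.1.choose 2) + v.2.2.2.2)

def rY (p : ℕ) (v : NV) : NV :=
  redV p (v.1, v.2.1 + 1, v.2.2.1, v.2.2.2.1, v.2.2.1 + v.2.2.2.2)

def rF (p : ℕ) (v : NV) : NV := redV p (v.1, v.2.1, v.2.2.1 + 1, v.2.2.2.1, v.2.2.2.2)
def rH1 (p : ℕ) (v : NV) : NV := redV p (v.1, v.2.1, v.2.2.1, v.2.2.2.1 + 1, v.2.2.2.2)
def rH2 (p : ℕ) (v : NV) : NV := redV p (v.1, v.2.1, v.2.2.1, v.2.2.2.1, v.2.2.2.2 + 1)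

def muV (p : ℕ) (v w : NV) : NV :=
  (rH2 p)^[w.2.2.2.2] ((rH1 p)^[w.2.2.2.1] ((rF p)^[w.2.2.1] ((rY p)^[w.2.1] ((rX p)^[w.1] v))))

def InBox (p : ℕ) (v : NV) : Prop :=
  v.1 < p ∧ v.2.1 < p ∧ v.2.2.1 < p ∧ v.2.2.2.1 < p ∧ v.2.2.2.2 < p

lemma inBox_redV {p : ℕ} (hp : 0 < p) (v : NV) : InBox p (redV p v) :=
  ⟨Nat.mod_lt _ hp, Nat.mod_lt _ hp, Nat.mod_lt _ hp, Nat.mod_lt _ hp, Nat.mod_lt _ hp⟩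

def Nf (X Y F H1 H2 : K) (v : NV) : K :=
  X ^ v.1 * Y ^ v.2.1 * F ^ v.2.2.1 * H1 ^ v.2.2.2.1 * H2 ^ v.2.2.2.2

structure PRel (p : ℕ) (X Y F H1 H2 : K) : Prop where
  hXY : cmt X Y = F
  hFX : cmt F X = H1
  hFY : cmt F Y = H2
  h1c : ∀ k, Commute H1 k
  h2c : ∀ k, Commute H2 k
  hXp : X ^ p = H1
  hYp : Y ^ p = H2
  hFp : F ^ p = 1
  h1p : H1 ^ p = 1
  h2p : H2 ^ p = 1

variable {p : ℕ} {X Y F H1 H2 : K} (R : PRel p X Y F H1 H2)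

lemma pow_reduce (u : K) (hu : u ^ p = 1) (m : ℕ) : u ^ m = u ^ (m % p) := by
  conv_lhs => rw [← Nat.div_add_mod m p, pow_add, pow_mul, hu, one_pow, one_mul]

include R

lemma Xsplit (a : ℕ) : X ^ a = H1 ^ (a / p) * X ^ (a % p) := by
  conv_lhs => rw [← Nat.div_add_mod a p, pow_add, pow_mul, R.hXp]

lemma Ysplit (b : ℕ) : Y ^ b = H2 ^ (b / p) * Y ^ (b % p) := by
  conv_lhs => rw [← Nat.div_add_mod b p, pow_add, pow_mul, R.hYp]

-- simp set for moving central H-powers to the right and merging powers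
lemma s1 (m : ℕ) (k : K) : H1 ^ m * k = k * H1 ^ m := ((R.h1c k).pow_left m).eq
lemma s2 (m : ℕ) (k : K) : H2 ^ m * k = k * H2 ^ m := ((R.h2c k).pow_left m).eq
lemma m1X (m n : ℕ) (w : K) : H1 ^ m * (X ^ n * w) = X ^ n * (H1 ^ m * w) := by
  rw [← mul_assoc, s1 R, mul_assoc]
lemma m1Y (m n : ℕ) (w : K) : H1 ^ m * (Y ^ n * w) = Y ^ n * (H1 ^ m * w) := by
  rw [← mul_assoc, s1 R, mul_assoc]
lemma m1F (m n : ℕ) (w : K) : H1 ^ m * (F ^ n * w) = F ^ n * (H1 ^ m * w) := by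
  rw [← mul_assoc, s1 R, mul_assoc]
lemma m2X (m n : ℕ) (w : K) : H2 ^ m * (X ^ n * w) = X ^ n * (H2 ^ m * w) := by
  rw [← mul_assoc, s2 R, mul_assoc]
lemma m2Y (m n : ℕ) (w : K) : H2 ^ m * (Y ^ n * w) = Y ^ n * (H2 ^ m * w) := by
  rw [← mul_assoc, s2 R, mul_assoc]
lemma m2F (m n : ℕ) (w : K) : H2 ^ m * (F ^ n * w) = F ^ n * (H2 ^ m * w) := by
  rw [← mul_assoc, s2 R, mul_assoc]
lemma m21 (m n : ℕ) (w : K) : H2 ^ m * (H1 ^ n * w) = H1 ^ n * (H2 ^ m * w) := by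
  rw [← mul_assoc, s2 R, mul_assoc]
lemma b1X (m n : ℕ) : H1 ^ m * X ^ n = X ^ n * H1 ^ m := s1 R m _
lemma b1Y (m n : ℕ) : H1 ^ m * Y ^ n = Y ^ n * H1 ^ m := s1 R m _
lemma b1F (m n : ℕ) : H1 ^ m * F ^ n = F ^ n * H1 ^ m := s1 R m _
lemma b2X (m n : ℕ) : H2 ^ m * X ^ n = X ^ n * H2 ^ m := s2 R m _
lemma b2Y (m n : ℕ) : H2 ^ m * Y ^ n = Y ^ n * H2 ^ m := s2 R m _
lemma b2F (m n : ℕ) : H2 ^ m * F ^ n = F ^ n * H2 ^ m := s2 R m _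
lemma b21 (m n : ℕ) : H2 ^ m * H1 ^ n = H1 ^ n * H2 ^ m := s2 R m _

omit R in
lemma pmerge (u : K) (a b : ℕ) (w : K) : u ^ a * (u ^ b * w) = u ^ (a + b) * w := by
  rw [← mul_assoc, ← pow_add]
omit R in
lemma pmerge' (u : K) (a b : ℕ) : u ^ a * u ^ b = u ^ (a + b) := (pow_add u a b).symm

lemma Nred (v : NV) : Nf X Y F H1 H2 (redV p v) = Nf X Y F H1 H2 v := by
  obtain ⟨a, b, c, d, e⟩ := v
  simp only [Nf, redV]
  rw [show X ^ a * Y ^ b * F ^ c * H1 ^ d * H2 ^ e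
      = X ^ a * (Y ^ b * (F ^ c * (H1 ^ d * H2 ^ e))) by simp [mul_assoc]]
  rw [Xsplit R a, Ysplit R b, pow_reduce F R.hFp c,
    ← pow_reduce H1 R.h1p (d + a / p), ← pow_reduce H2 R.h2p (e + b / p)]
  simp only [mul_assoc, m1X R, m1Y R, m1F R, m2X R, m2Y R, m2F R, m21 R,
    b1X R, b1Y R, b1F R, b2X R, b2Y R, b2F R, b21 R, pmerge, pmerge']
  ring_nf

-- more move rules with bare right factors
lemma n1X (m : ℕ) (w : K) : H1 ^ m * (X * w) = X * (H1 ^ m * w) := by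
  rw [← mul_assoc, s1 R, mul_assoc]
lemma n2X (m : ℕ) (w : K) : H2 ^ m * (X * w) = X * (H2 ^ m * w) := by
  rw [← mul_assoc, s2 R, mul_assoc]
lemma n1Xb (m : ℕ) : H1 ^ m * X = X * H1 ^ m := s1 R m _
lemma n2Xb (m : ℕ) : H2 ^ m * X = X * H2 ^ m := s2 R m _
lemma n1Y (m : ℕ) (w : K) : H1 ^ m * (Y * w) = Y * (H1 ^ m * w) := by
  rw [← mul_assoc, s1 R, mul_assoc]
lemma n2Y (m : ℕ) (w : K) : H2 ^ m * (Y * w) = Y * (H2 ^ m * w) := by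
  rw [← mul_assoc, s2 R, mul_assoc]
lemma n1Yb (m : ℕ) : H1 ^ m * Y = Y * H1 ^ m := s1 R m _
lemma n2Yb (m : ℕ) : H2 ^ m * Y = Y * H2 ^ m := s2 R m _
lemma n1F (m : ℕ) (w : K) : H1 ^ m * (F * w) = F * (H1 ^ m * w) := by
  rw [← mul_assoc, s1 R, mul_assoc]
lemma n2F (m : ℕ) (w : K) : H2 ^ m * (F * w) = F * (H2 ^ m * w) := by
  rw [← mul_assoc, s2 R, mul_assoc]
lemma n1Fb (m : ℕ) : H1 ^ m * F = F * H1 ^ m := s1 R m _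
lemma n2Fb (m : ℕ) : H2 ^ m * F = F * H2 ^ m := s2 R m _
lemma n1H2 (m : ℕ) (w : K) : H2 ^ m * (H1 * w) = H1 * (H2 ^ m * w) := by
  rw [← mul_assoc, s2 R, mul_assoc]
lemma n1H2b (m : ℕ) : H2 ^ m * H1 = H1 * H2 ^ m := s2 R m _

omit R in
lemma pmerge1 (u : K) (a : ℕ) (w : K) : u ^ a * (u * w) = u ^ (a + 1) * w := by
  rw [← mul_assoc, ← pow_succ]
omit R in
lemma pmerge1' (u : K) (a : ℕ) : u ^ a * u = u ^ (a + 1) := (pow_succ u a).symm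

lemma cmtFXpow (n : ℕ) : cmt (F ^ n) X = H1 ^ n := by
  have h0 : cmt H1 F = 1 := cmt_central_left _ _ R.h1c
  have := cmt_pow_left F X H1 1 R.hFX h0 (fun k => Commute.one_left k) n
  simpa using this

lemma cmtFYpow (n : ℕ) : cmt (F ^ n) Y = H2 ^ n := by
  have h0 : cmt H2 F = 1 := cmt_central_left _ _ R.h2c
  have := cmt_pow_left F Y H2 1 R.hFY h0 (fun k => Commute.one_left k) n
  simpa using this

lemma stepFXb (n : ℕ) : F ^ n * X = X * (F ^ n * H1 ^ n) := by
  rw [mul_eq_of_cmt (F ^ n) X, cmtFXpow R, mul_assoc]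

lemma stepFX (n : ℕ) (w : K) : F ^ n * (X * w) = X * (F ^ n * (H1 ^ n * w)) := by
  rw [← mul_assoc, stepFXb R, mul_assoc, mul_assoc]

lemma stepFYb (n : ℕ) : F ^ n * Y = Y * (F ^ n * H2 ^ n) := by
  rw [mul_eq_of_cmt (F ^ n) Y, cmtFYpow R, mul_assoc]

lemma stepFY (n : ℕ) (w : K) : F ^ n * (Y * w) = Y * (F ^ n * (H2 ^ n * w)) := by
  rw [← mul_assoc, stepFYb R, mul_assoc, mul_assoc]

lemma Fpinv (hp : 0 < p) : F ^ (p - 1) = F⁻¹ := by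
  apply eq_inv_of_mul_eq_one_left
  rw [← pow_succ, Nat.sub_add_cancel hp, R.hFp]

lemma H2pinv (hp : 0 < p) : H2 ^ (p - 1) = H2⁻¹ := by
  apply eq_inv_of_mul_eq_one_left
  rw [← pow_succ, Nat.sub_add_cancel hp, R.h2p]

lemma cmtYXpow (hp : 0 < p) (n : ℕ) :
    cmt (Y ^ n) X = F ^ ((p - 1) * n) * H2 ^ ((p - 1) * n.choose 2) := by
  have hYX : cmt Y X = F⁻¹ := by rw [cmt_swap, R.hXY]
  have hFiY : cmt F⁻¹ Y = H2⁻¹ := cmt_inv_left F Y H2 R.hFY R.h2c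
  have hh : ∀ k, Commute H2⁻¹ k := fun k => (R.h2c k).inv_left
  have := cmt_pow_left Y X F⁻¹ H2⁻¹ hYX hFiY hh n
  rw [this, ← Fpinv R hp, ← H2pinv R hp, ← pow_mul, ← pow_mul]

lemma stepYXb (hp : 0 < p) (n : ℕ) :
    Y ^ n * X = X * (Y ^ n * (F ^ ((p - 1) * n) * H2 ^ ((p - 1) * n.choose 2))) := by
  rw [mul_eq_of_cmt (Y ^ n) X, cmtYXpow R hp, mul_assoc]

lemma stepYX (hp : 0 < p) (n : ℕ) (w : K) :
    Y ^ n * (X * w)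
      = X * (Y ^ n * (F ^ ((p - 1) * n) * (H2 ^ ((p - 1) * n.choose 2) * w))) := by
  rw [← mul_assoc, stepYXb R hp]
  simp only [mul_assoc]

lemma NmulX (hp : 0 < p) (v : NV) :
    Nf X Y F H1 H2 v * X = Nf X Y F H1 H2 (rX p v) := by
  obtain ⟨a, b, c, d, e⟩ := v
  rw [rX, Nred R]
  simp only [Nf]
  simp only [mul_assoc]
  simp only [n1Xb R, n2Xb R, n1X R, n2X R, stepFXb R, stepFX R, stepYXb R hp, stepYX R hp,
    m1X R, m1Y R, m1F R, m2X R, m2Y R, m2F R, m21 R,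
    b1X R, b1Y R, b1F R, b2X R, b2Y R, b2F R, b21 R, pmerge, pmerge', pmerge1, pmerge1']
  try ring_nf

lemma NmulY (v : NV) : Nf X Y F H1 H2 v * Y = Nf X Y F H1 H2 (rY p v) := by
  obtain ⟨a, b, c, d, e⟩ := v
  rw [rY, Nred R]
  simp only [Nf]
  simp only [mul_assoc]
  simp only [n1Yb R, n2Yb R, n1Y R, n2Y R, stepFYb R, stepFY R,
    m1X R, m1Y R, m1F R, m2X R, m2Y R, m2F R, m21 R,
    b1X R, b1Y R, b1F R, b2X R, b2Y R, b2F R, b21 R, pmerge, pmerge', pmerge1, pmerge1']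
  try ring_nf

lemma NmulF (v : NV) : Nf X Y F H1 H2 v * F = Nf X Y F H1 H2 (rF p v) := by
  obtain ⟨a, b, c, d, e⟩ := v
  rw [rF, Nred R]
  simp only [Nf]
  simp only [mul_assoc]
  simp only [n1Fb R, n2Fb R, n1F R, n2F R,
    m1X R, m1Y R, m1F R, m2X R, m2Y R, m2F R, m21 R,
    b1X R, b1Y R, b1F R, b2X R, b2Y R, b2F R, b21 R, pmerge, pmerge', pmerge1, pmerge1']
  try ring_nf

lemma NmulH1 (v : NV) : Nf X Y F H1 H2 v * H1 = Nf X Y F H1 H2 (rH1 p v) := by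
  obtain ⟨a, b, c, d, e⟩ := v
  rw [rH1, Nred R]
  simp only [Nf]
  simp only [mul_assoc]
  simp only [n1H2b R, n1H2 R,
    m1X R, m1Y R, m1F R, m2X R, m2Y R, m2F R, m21 R,
    b1X R, b1Y R, b1F R, b2X R, b2Y R, b2F R, b21 R, pmerge, pmerge', pmerge1, pmerge1']
  try ring_nf

lemma NmulH2 (v : NV) : Nf X Y F H1 H2 v * H2 = Nf X Y F H1 H2 (rH2 p v) := by
  obtain ⟨a, b, c, d, e⟩ := v
  rw [rH2, Nred R]
  simp only [Nf]
  simp only [mul_assoc]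
  simp only [m1X R, m1Y R, m1F R, m2X R, m2Y R, m2F R, m21 R,
    b1X R, b1Y R, b1F R, b2X R, b2Y R, b2F R, b21 R, pmerge, pmerge', pmerge1, pmerge1']
  try ring_nf

lemma NmulXiter (hp : 0 < p) (v : NV) (m : ℕ) :
    Nf X Y F H1 H2 v * X ^ m = Nf X Y F H1 H2 ((rX p)^[m] v) := by
  induction m with
  | zero => simp
  | succ m ih =>
      rw [pow_succ, ← mul_assoc, ih, NmulX R hp, Function.iterate_succ_apply']

lemma NmulYiter (v : NV) (m : ℕ) :
    Nf X Y F H1 H2 v * Y ^ m = Nf X Y F H1 H2 ((rY p)^[m] v) := by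
  induction m with
  | zero => simp
  | succ m ih => rw [pow_succ, ← mul_assoc, ih, NmulY R, Function.iterate_succ_apply']

lemma NmulFiter (v : NV) (m : ℕ) :
    Nf X Y F H1 H2 v * F ^ m = Nf X Y F H1 H2 ((rF p)^[m] v) := by
  induction m with
  | zero => simp
  | succ m ih => rw [pow_succ, ← mul_assoc, ih, NmulF R, Function.iterate_succ_apply']

lemma NmulH1iter (v : NV) (m : ℕ) :
    Nf X Y F H1 H2 v * H1 ^ m = Nf X Y F H1 H2 ((rH1 p)^[m] v) := by
  induction m with
  | zero => simp
  | succ m ih => rw [pow_succ, ← mul_assoc, ih, NmulH1 R, Function.iterate_succ_apply']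

lemma NmulH2iter (v : NV) (m : ℕ) :
    Nf X Y F H1 H2 v * H2 ^ m = Nf X Y F H1 H2 ((rH2 p)^[m] v) := by
  induction m with
  | zero => simp
  | succ m ih => rw [pow_succ, ← mul_assoc, ih, NmulH2 R, Function.iterate_succ_apply']

lemma Nmul (hp : 0 < p) (v w : NV) :
    Nf X Y F H1 H2 v * Nf X Y F H1 H2 w = Nf X Y F H1 H2 (muV p v w) := by
  obtain ⟨a, b, c, d, e⟩ := w
  show Nf X Y F H1 H2 v * (X ^ a * Y ^ b * F ^ c * H1 ^ d * H2 ^ e) = _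
  rw [show X ^ a * Y ^ b * F ^ c * H1 ^ d * H2 ^ e
      = X ^ a * (Y ^ b * (F ^ c * (H1 ^ d * H2 ^ e))) by simp [mul_assoc]]
  rw [← mul_assoc, NmulXiter R hp, ← mul_assoc, NmulYiter R, ← mul_assoc, NmulFiter R,
    ← mul_assoc, NmulH1iter R, NmulH2iter R]
  rfl

omit R in
lemma inBox_iter {p : ℕ} (hp : 0 < p) (r : NV → NV)
    (hr : ∀ u, InBox p (r u)) (v : NV) (hv : InBox p v) (m : ℕ) : InBox p (r^[m] v) := by
  induction m with
  | zero => simpa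
  | succ m ih => rw [Function.iterate_succ_apply']; exact hr _

omit R in
lemma inBox_muV {p : ℕ} (hp : 0 < p) (v w : NV) (hv : InBox p v) :
    InBox p (muV p v w) := by
  unfold muV
  apply inBox_iter hp _ (fun u => inBox_redV hp _) _ ?_
  apply inBox_iter hp _ (fun u => inBox_redV hp _) _ ?_
  apply inBox_iter hp _ (fun u => inBox_redV hp _) _ ?_
  apply inBox_iter hp _ (fun u => inBox_redV hp _) _ ?_
  exact inBox_iter hp _ (fun u => inBox_redV hp _) _ hv _

end Collect

section Derive
variable {K : Type*} [Group K]

/-- Derivation of the power relations in the extension. -/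
lemma derive_rel (p : ℕ) (hodd : Odd p) (x y : K)
    (hxc : ∀ k, Commute (x ^ p) k) (hyc : ∀ k, Commute (y ^ p) k)
    (h1c : ∀ k, Commute (cmt (cmt x y) x) k)
    (h2c : ∀ k, Commute (cmt (cmt x y) y) k) :
    (cmt (cmt x y) x) ^ p = 1 ∧ (cmt (cmt x y) y) ^ p = 1 ∧ (cmt x y) ^ p = 1 := by
  set F := cmt x y with hF
  set H1 := cmt F x with hH1
  set H2 := cmt F y with hH2
  have h1p : H1 ^ p = 1 := by
    have e1 : cmt F (x ^ p) = H1 ^ p := cmt_pow_right F x H1 rfl h1c p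
    rw [cmt_central_right F (x ^ p) hxc] at e1
    exact e1.symm
  have h2p : H2 ^ p = 1 := by
    have e1 : cmt F (y ^ p) = H2 ^ p := cmt_pow_right F y H2 rfl h2c p
    rw [cmt_central_right F (y ^ p) hyc] at e1
    exact e1.symm
  refine ⟨h1p, h2p, ?_⟩
  have e2 : cmt (x ^ p) y = F ^ p * H1 ^ p.choose 2 :=
    cmt_pow_left x y F H1 rfl rfl h1c p
  rw [cmt_central_left (x ^ p) y hxc] at e2
  obtain ⟨k, hk⟩ := hodd
  have hch : p.choose 2 = p * k := by
    rw [Nat.choose_two_right, hk]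
    have h1 : 2 * k + 1 - 1 = 2 * k := by omega
    rw [h1, show (2 * k + 1) * (2 * k) = ((2 * k + 1) * k) * 2 by ring,
      Nat.mul_div_cancel _ (by norm_num)]
  rw [hch, pow_mul, h1p, one_pow, mul_one] at e2
  exact e2.symm
end Derive

section CmtExtra
variable {K : Type*} [Group K]

lemma cmt_central_mul_left (z a b : K) (hz : ∀ k, Commute z k) : cmt (z * a) b = cmt a b := by
  rw [cmt_mul_left, cmt_central_left z b hz]
  group

lemma cmt_central_mul_right (z a b : K) (hz : ∀ k, Commute z k) : cmt a (z * b) = cmt a b := by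
  rw [cmt_mul_right, cmt_central_right a z hz]
  group

end CmtExtra

lemma QZ_div (n : ℕ) (hn : n ≠ 0) (t : QZ) : ∃ q : QZ, n • q = t := by
  obtain ⟨r, rfl⟩ := QuotientAddGroup.mk_surjective t
  refine ⟨QuotientAddGroup.mk (r / n), ?_⟩
  rw [← QuotientAddGroup.mk_nsmul]
  congr 1
  rw [nsmul_eq_mul]
  field_simp
section Cocycle
variable {G : Type*} [Group G] {f : G → G → QZ}

lemma cocycle_one_left (hco : IsGrpCocycle f) (k : G) : f 1 k = f 1 1 := by
  have h := hco 1 1 k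
  simp only [one_mul] at h
  exact (add_right_cancel h).symm

lemma cocycle_one_right (hco : IsGrpCocycle f) (g : G) : f g 1 = f 1 1 := by
  have h := hco g 1 1
  simp only [mul_one, one_mul] at h
  have h2 : f g 1 + f g 1 = f 1 1 + f g 1 := h
  exact add_right_cancel h2

lemma cocycle_inv (hco : IsGrpCocycle f) (g : G) : f g⁻¹ g = f g g⁻¹ := by
  have h := hco g g⁻¹ g
  rw [mul_inv_cancel, inv_mul_cancel, cocycle_one_left hco g, cocycle_one_right hco g] at h
  exact (add_right_cancel h).symm

end Cocycle

@[ext]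
structure ExtT (G : Type*) where
  fst : QZ
  snd : G

def extGroup {G : Type*} [Group G] (f : G → G → QZ) (hco : IsGrpCocycle f) :
    Group (ExtT G) where
  mul x y := ⟨x.fst + y.fst + f x.snd y.snd, x.snd * y.snd⟩
  one := ⟨-f 1 1, 1⟩
  inv x := ⟨-f 1 1 - x.fst - f x.snd x.snd⁻¹, x.snd⁻¹⟩
  mul_assoc a b c := by
    ext
    · show a.fst + b.fst + f a.snd b.snd + c.fst + f (a.snd * b.snd) c.snd
        = a.fst + (b.fst + c.fst + f b.snd c.snd) + f a.snd (b.snd * c.snd)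
      have h := hco a.snd b.snd c.snd
      calc a.fst + b.fst + f a.snd b.snd + c.fst + f (a.snd * b.snd) c.snd
          = a.fst + b.fst + c.fst + (f a.snd b.snd + f (a.snd * b.snd) c.snd) := by abel
        _ = a.fst + b.fst + c.fst + (f b.snd c.snd + f a.snd (b.snd * c.snd)) := by rw [h]
        _ = a.fst + (b.fst + c.fst + f b.snd c.snd) + f a.snd (b.snd * c.snd) := by abel
    · exact mul_assoc _ _ _
  one_mul a := by
    ext
    · show -f 1 1 + a.fst + f 1 a.snd = a.fst
      rw [cocycle_one_left hco a.snd]; abel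
    · exact one_mul _
  mul_one a := by
    ext
    · show a.fst + -f 1 1 + f a.snd 1 = a.fst
      rw [cocycle_one_right hco a.snd]; abel
    · exact mul_one _
  inv_mul_cancel a := by
    ext
    · show -f 1 1 - a.fst - f a.snd a.snd⁻¹ + a.fst + f a.snd⁻¹ a.snd = -f 1 1
      rw [cocycle_inv hco a.snd]; abel
    · exact inv_mul_cancel _

section Sym
variable {G : Type*} [Group G]

lemma isCyclic_zpowers (g : G) : IsCyclic (Subgroup.zpowers g) := by
  refine ⟨⟨⟨g, Subgroup.mem_zpowers g⟩, fun x => ?_⟩⟩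
  obtain ⟨k, hk⟩ := Subgroup.mem_zpowers_iff.mp x.2
  exact Subgroup.mem_zpowers_iff.mpr ⟨k, Subtype.ext (by simpa using hk)⟩

lemma sym_of_restricts [Finite G] {f : G → G → QZ}
    (hres : RestrictsToCoboundaries f) {p : ℕ} (hp : p.Prime) {z : G}
    (hzc : z ∈ Subgroup.center G) (hzp : z ^ p = 1) (g : G) : f z g = f g z := by
  have hzg : ∀ (A : Subgroup G) (hz : z ∈ A) (hg : g ∈ A),
      IsBicyclic A → f z g = f g z := by
    intro A hz hg hbi
    obtain ⟨c, hc⟩ := hres A hbi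
    have h1 := hc ⟨z, hz⟩ ⟨g, hg⟩
    have h2 := hc ⟨g, hg⟩ ⟨z, hz⟩
    have hcomm : (⟨z, hz⟩ * ⟨g, hg⟩ : A) = ⟨g, hg⟩ * ⟨z, hz⟩ := by
      ext
      exact (Subgroup.mem_center_iff.mp hzc g).symm
    rw [hcomm] at h1
    simp only at h1 h2
    rw [h1, h2]
    abel
  by_cases hzmem : z ∈ Subgroup.zpowers g
  · exact hzg (Subgroup.zpowers g) hzmem (Subgroup.mem_zpowers g)
      (Or.inl (isCyclic_zpowers g))
  · -- z ∉ ⟨g⟩; use A = closure {z, g} ≃ ⟨g⟩ × ⟨z⟩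
    have hz1 : z ≠ 1 := fun h => hzmem (h ▸ (Subgroup.zpowers g).one_mem)
    have hordz : orderOf z = p := by
      rcases (Nat.dvd_prime hp).mp (orderOf_dvd_of_pow_eq_one hzp) with h | h
      · exact absurd (orderOf_eq_one_iff.mp h) hz1
      · exact h
    set A := Subgroup.closure ({z, g} : Set G) with hA
    have hzA : z ∈ A := Subgroup.subset_closure (by simp)
    have hgA : g ∈ A := Subgroup.subset_closure (by simp)
    set za : A := ⟨z, hzA⟩ with hza
    set ga : A := ⟨g, hgA⟩ with hga
    have hzcomm : ∀ u : A, Commute za u := by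
      intro u
      have := Subgroup.mem_center_iff.mp hzc (u : G)
      exact Subtype.ext this.symm
    set B := Subgroup.zpowers ga with hB
    set C := Subgroup.zpowers za with hC
    -- the multiplication map B × C → A
    have hmapmul : ∀ q r : B × C,
        ((q.1 : A) * (q.2 : A)) * ((r.1 : A) * (r.2 : A))
          = ((q.1 : A) * (r.1 : A)) * ((q.2 : A) * (r.2 : A)) := by
      intro q r
      obtain ⟨k, hk⟩ := Subgroup.mem_zpowers_iff.mp q.2.2
      have hcom : Commute (q.2 : A) (r.1 : A) := by
        rw [← hk]; exact ((hzcomm (r.1 : A)).zpow_left k)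
      rw [mul_assoc, ← mul_assoc (q.2 : A), hcom.eq, mul_assoc, ← mul_assoc]
    let φ : B × C →* A := MonoidHom.mk' (fun q => (q.1 : A) * (q.2 : A))
      (fun q r => by
        have := (hmapmul q r).symm
        simpa using this)
    have hval : ∀ u : A, u ∈ B → (u : G) ∈ Subgroup.zpowers g := by
      intro u hu
      obtain ⟨k, hk⟩ := Subgroup.mem_zpowers_iff.mp hu
      exact Subgroup.mem_zpowers_iff.mpr ⟨k, by rw [← hk]; simp [hga]⟩
    have hvalC : ∀ u : A, u ∈ C → ∃ k : ℤ, z ^ k = (u : G) := by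
      intro u hu
      obtain ⟨k, hk⟩ := Subgroup.mem_zpowers_iff.mp hu
      exact ⟨k, by rw [← hk]; simp [hza]⟩
    have hinj : Function.Injective φ := by
      rw [injective_iff_map_eq_one]
      rintro ⟨b, c⟩ hbc
      have hbc' : (b : A) * (c : A) = 1 := hbc
      have hbval : ((b : A) : G) ∈ Subgroup.zpowers g := hval _ b.2
      obtain ⟨k, hk⟩ := hvalC _ c.2
      have hbinv : (b : A) = (c : A)⁻¹ := eq_inv_of_mul_eq_one_left hbc'
      have ht : ((b : A) : G) = z ^ (-k) := by
        rw [hbinv]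
        push_cast
        rw [← hk, ← zpow_neg]
      -- show z ^ (-k) = 1
      have htone : ((b : A) : G) = 1 := by
        by_contra ht1
        -- t ≠ 1, t = z ^ n' with 0 < n' < p
        have hpz : (0 : ℤ) < (p : ℤ) := by exact_mod_cast hp.pos
        have hmod : z ^ (-k) = z ^ ((-k) % (p : ℤ)) := by
          conv_lhs => rw [← zpow_mod_orderOf z (-k)]
          rw [hordz]
        set m : ℤ := (-k) % (p : ℤ) with hm
        have hm0 : 0 ≤ m := Int.emod_nonneg _ (by omega)
        have hmp : m < (p : ℤ) := Int.emod_lt_of_pos _ hpz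
        set n' : ℕ := m.toNat with hn'
        have hzn : ((b : A) : G) = z ^ n' := by
          rw [ht, hmod, ← zpow_natCast, hn', Int.toNat_of_nonneg hm0]
        have hn0 : n' ≠ 0 := by
          intro h
          rw [h, pow_zero] at hzn
          exact ht1 hzn
        have hnp : n' < p := by omega
        have hgcd : Nat.Coprime p n' := (Nat.Prime.coprime_iff_not_dvd hp).mpr
          (Nat.not_dvd_of_pos_of_lt (Nat.pos_of_ne_zero hn0) hnp)
        have hordt : orderOf (z ^ n') = p := by
          rw [orderOf_pow, hordz, Nat.Coprime.gcd_eq_one hgcd, Nat.div_one]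
        have hle : Subgroup.zpowers (z ^ n') ≤ Subgroup.zpowers z :=
          Subgroup.zpowers_le.mpr (Subgroup.mem_zpowers_iff.mpr ⟨(n' : ℤ), zpow_natCast z n'⟩)
        have hcard : Nat.card (Subgroup.zpowers z) ≤ Nat.card (Subgroup.zpowers (z ^ n')) := by
          rw [Nat.card_zpowers, Nat.card_zpowers, hordz, hordt]
        have heq : Subgroup.zpowers (z ^ n') = Subgroup.zpowers z :=
          Subgroup.eq_of_le_of_card_ge hle hcard
        have hz_in : z ∈ Subgroup.zpowers (z ^ n') := heq ▸ Subgroup.mem_zpowers z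
        have htg : (z ^ n') ∈ Subgroup.zpowers g := by rw [← hzn]; exact hbval
        exact hzmem (Subgroup.zpowers_le.mpr htg hz_in)
      have hbone : b = 1 := by
        ext
        exact htone
      have hcone : c = 1 := by
        have : (c : A) = 1 := by
          have h1 : (b : A) = 1 := by ext; exact htone
          rw [h1, one_mul] at hbc'
          exact hbc'
        ext
        exact congrArg Subtype.val this
      rw [hbone, hcone]
      rfl
    have hzc' : ∀ w : G, Commute z w := fun w => ((Subgroup.mem_center_iff.mp hzc w)).symm
    have hsurj : Function.Surjective φ := by
      intro a
      have key : ∃ i j : ℤ, (a : G) = g ^ i * z ^ j := by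
        refine Subgroup.closure_induction ?_ ?_ ?_ ?_ a.2
        · intro x hx
          rcases hx with h | h
          · exact ⟨0, 1, by simp [h]⟩
          · exact ⟨1, 0, by simp [Set.eq_of_mem_singleton h]⟩
        · exact ⟨0, 0, by simp⟩
        · rintro u v _ _ ⟨i, j, rfl⟩ ⟨i', j', rfl⟩
          refine ⟨i + i', j + j', ?_⟩
          have hcw : z ^ j * g ^ i' = g ^ i' * z ^ j := ((hzc' (g ^ i')).zpow_left j).eq
          rw [mul_assoc, ← mul_assoc (z ^ j), hcw, zpow_add, zpow_add]
          group
        · rintro u _ ⟨i, j, rfl⟩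
          refine ⟨-i, -j, ?_⟩
          have hcw : z ^ (-j) * g ^ (-i) = g ^ (-i) * z ^ (-j) := ((hzc' (g ^ (-i))).zpow_left (-j)).eq
          rw [mul_inv_rev, ← zpow_neg, ← zpow_neg, hcw]
      obtain ⟨i, j, hij⟩ := key
      refine ⟨(⟨ga ^ i, Subgroup.mem_zpowers_iff.mpr ⟨i, rfl⟩⟩,
        ⟨za ^ j, Subgroup.mem_zpowers_iff.mpr ⟨j, rfl⟩⟩), ?_⟩
      show (ga : A) ^ i * (za : A) ^ j = a
      ext
      push_cast
      exact hij.symm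
    have e : (B × C) ≃* A := MulEquiv.ofBijective φ ⟨hinj, hsurj⟩
    exact hzg A hzA hgA (Or.inr ⟨B, C, isCyclic_zpowers ga, isCyclic_zpowers za, ⟨e.symm⟩⟩)

end Sym

/-- Let `p` be an odd prime and `G` the group `Φ₆(221)a` of order `p⁵`: generated by
`f1, f2, f0, h1, h2` with `Z(G) = ⟨h1, h2⟩` and relations `[f1,f2] = f0`, `[f0,f1] = h1`,
`[f0,f2] = h2`, `f0^p = h1^p = h2^p = 1`, `f1^p = h1`, `f2^p = h2`. Then `B₀(G) = 0`. -/
theorem B0_phi6a_eq_bot (p : ℕ) (hp : p.Prime) (hodd : Odd p)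
    (G : Type) [Group G] [Finite G] (hcard : Nat.card G = p ^ 5)
    (f1 f2 f0 h1 h2 : G)
    (hgen : Subgroup.closure {f1, f2, f0, h1, h2} = ⊤)
    (hcen : Subgroup.closure {h1, h2} = Subgroup.center G)
    (r1 : cmt f1 f2 = f0) (r2 : cmt f0 f1 = h1) (r3 : cmt f0 f2 = h2)
    (r4 : f0 ^ p = 1) (r5 : h1 ^ p = 1) (r6 : h2 ^ p = 1)
    (r7 : f1 ^ p = h1) (r8 : f2 ^ p = h2) :
    B0 G = ⊥ := by
  have hp0 : 0 < p := hp.pos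
  have hp1 : 1 < p := hp.one_lt
  have h1cen : h1 ∈ Subgroup.center G := hcen ▸ Subgroup.subset_closure (by simp)
  have h2cen : h2 ∈ Subgroup.center G := hcen ▸ Subgroup.subset_closure (by simp)
  rw [eq_bot_iff]
  rintro x ⟨fc, rfl, hres⟩
  rw [AddSubgroup.mem_bot, QuotientAddGroup.eq_zero_iff]
  set f : G → G → QZ := (fc : G → G → QZ) with hfdef
  have hco : IsGrpCocycle f := fc.2
  show IsGrpCoboundary f
  -- Step 1: symmetry on central elements of order p
  have hsym1 : ∀ g, f h1 g = f g h1 := fun g => sym_of_restricts hres hp h1cen r5 g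
  have hsym2 : ∀ g, f h2 g = f g h2 := fun g => sym_of_restricts hres hp h2cen r6 g
  -- Step 2: the central extension
  letI : Group (ExtT G) := extGroup f hco
  have hmulE : ∀ a b : ExtT G, a * b = ⟨a.fst + b.fst + f a.snd b.snd, a.snd * b.snd⟩ :=
    fun a b => rfl
  let π : ExtT G →* G := MonoidHom.mk' ExtT.snd (fun a b => rfl)
  have hπdef : ∀ a : ExtT G, π a = a.snd := fun a => rfl
  have hcentral : ∀ (z : G), z ∈ Subgroup.center G → (∀ g, f z g = f g z) →
      ∀ w : ExtT G, w.snd = z → ∀ k : ExtT G, Commute w k := by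
    intro z hz hsymz w hw k
    show w * k = k * w
    rw [hmulE, hmulE]
    ext
    · show w.fst + k.fst + f w.snd k.snd = k.fst + w.fst + f k.snd w.snd
      rw [hw, hsymz k.snd]
      abel
    · show w.snd * k.snd = k.snd * w.snd
      rw [hw]
      exact (Subgroup.mem_center_iff.mp hz k.snd).symm
  set x : ExtT G := ⟨0, f1⟩ with hxdef
  set y : ExtT G := ⟨0, f2⟩ with hydef
  have hπcmt : ∀ a b : ExtT G, π (cmt a b) = cmt (π a) (π b) := by
    intro a b
    simp [cmt, map_mul, map_inv]
  have hπx : π x = f1 := rfl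
  have hπy : π y = f2 := rfl
  set Fe : ExtT G := cmt x y with hFedef
  set He1 : ExtT G := cmt Fe x with hHe1def
  set He2 : ExtT G := cmt Fe y with hHe2def
  have hπF : π Fe = f0 := by rw [hFedef, hπcmt, hπx, hπy, r1]
  have hπH1 : π He1 = h1 := by rw [hHe1def, hπcmt, hπF, hπx, r2]
  have hπH2 : π He2 = h2 := by rw [hHe2def, hπcmt, hπF, hπy, r3]
  have hπxp : π (x ^ p) = h1 := by rw [map_pow, hπx, r7]
  have hπyp : π (y ^ p) = h2 := by rw [map_pow, hπy, r8]
  have hc1 : ∀ k, Commute He1 k := hcentral h1 h1cen hsym1 He1 hπH1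
  have hc2 : ∀ k, Commute He2 k := hcentral h2 h2cen hsym2 He2 hπH2
  have hcxp : ∀ k, Commute (x ^ p) k := hcentral h1 h1cen hsym1 (x ^ p) hπxp
  have hcyp : ∀ k, Commute (y ^ p) k := hcentral h2 h2cen hsym2 (y ^ p) hπyp
  obtain ⟨He1p, He2p, hFep⟩ := derive_rel p hodd x y hcxp hcyp hc1 hc2
  -- Step 3: adjust the lifts so that X^p = He1, Y^p = He2
  have hone_sym : ∀ g : G, f 1 g = f g 1 := fun g => by
    rw [cocycle_one_left hco g, cocycle_one_right hco g]
  have hqcen : ∀ q : QZ, ∀ k, Commute (⟨q, 1⟩ : ExtT G) k :=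
    fun q => hcentral 1 (Subgroup.one_mem _) hone_sym ⟨q, 1⟩ rfl
  have hqpow : ∀ (q : QZ) (n : ℕ),
      (⟨q, 1⟩ : ExtT G) ^ (n + 1) = ⟨(n + 1) • q + n • f 1 1, 1⟩ := by
    intro q n
    induction n with
    | zero => simp
    | succ n ih =>
        rw [pow_succ, ih, hmulE]
        ext
        · show (n + 1) • q + n • f 1 1 + q + f 1 1 = (n + 2) • q + (n + 1) • f 1 1
          rw [succ_nsmul q (n + 1), succ_nsmul (f 1 1) n]
          abel
        · exact one_mul 1
  -- the adjusting central elements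
  have hadj : ∀ w : ExtT G, w.snd = 1 →
      ∃ z : ExtT G, (∀ k, Commute z k) ∧ z ^ p = w ∧ z.snd = 1 := by
    intro w hw
    obtain ⟨q, hq⟩ := QZ_div p hp.pos.ne' (w.fst - (p - 1) • f 1 1)
    refine ⟨⟨q, 1⟩, hqcen q, ?_, rfl⟩
    have hpp : p - 1 + 1 = p := Nat.succ_pred_eq_of_pos hp0
    rw [← hpp, hqpow q (p - 1), hpp]
    ext
    · show p • q + (p - 1) • f 1 1 = w.fst
      rw [hq]
      abel
    · exact hw.symm
  have ht1snd : (x ^ p * He1⁻¹).snd = 1 := by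
    show π (x ^ p * He1⁻¹) = 1
    rw [map_mul, map_inv, hπxp, hπH1, mul_inv_cancel]
  have ht2snd : (y ^ p * He2⁻¹).snd = 1 := by
    show π (y ^ p * He2⁻¹) = 1
    rw [map_mul, map_inv, hπyp, hπH2, mul_inv_cancel]
  obtain ⟨z1, hz1c, hz1p, hz1s⟩ := hadj ((x ^ p * He1⁻¹)⁻¹) (by rw [← hπdef, map_inv, hπdef, ht1snd, inv_one])
  obtain ⟨z2, hz2c, hz2p, hz2s⟩ := hadj ((y ^ p * He2⁻¹)⁻¹) (by rw [← hπdef, map_inv, hπdef, ht2snd, inv_one])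
  set X : ExtT G := z1 * x with hXdef
  set Y : ExtT G := z2 * y with hYdef
  have hXp : X ^ p = He1 := by
    rw [hXdef, (hz1c x).mul_pow, hz1p, mul_inv_rev, inv_inv, mul_assoc, inv_mul_cancel, mul_one]
  have hYp : Y ^ p = He2 := by
    rw [hYdef, (hz2c y).mul_pow, hz2p, mul_inv_rev, inv_inv, mul_assoc, inv_mul_cancel, mul_one]
  have hXY : cmt X Y = Fe := by
    rw [hXdef, hYdef, cmt_central_mul_left _ _ _ hz1c, cmt_central_mul_right _ _ _ hz2c, hFedef]
  have hFX : cmt Fe X = He1 := by rw [hXdef, cmt_central_mul_right _ _ _ hz1c, hHe1def]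
  have hFY : cmt Fe Y = He2 := by rw [hYdef, cmt_central_mul_right _ _ _ hz2c, hHe2def]
  have RE : PRel p X Y Fe He1 He2 := ⟨hXY, hFX, hFY, hc1, hc2, hXp, hYp, hFep, He1p, He2p⟩
  have hG1c : ∀ k, Commute h1 k := fun k => (Subgroup.mem_center_iff.mp h1cen k).symm
  have hG2c : ∀ k, Commute h2 k := fun k => (Subgroup.mem_center_iff.mp h2cen k).symm
  have RG : PRel p f1 f2 f0 h1 h2 := ⟨r1, r2, r3, hG1c, hG2c, r7, r8, r4, r5, r6⟩
  set Mf : NV → G := Nf f1 f2 f0 h1 h2 with hMfdef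
  set Nfe : NV → ExtT G := Nf X Y Fe He1 He2 with hNfedef
  have hπX : π X = f1 := by
    rw [hXdef, map_mul, hπx, hπdef z1, hz1s, one_mul]
  have hπY : π Y = f2 := by
    rw [hYdef, map_mul, hπy, hπdef z2, hz2s, one_mul]
  have hπN : ∀ v : NV, π (Nfe v) = Mf v := by
    intro v
    simp only [hNfedef, hMfdef, Nf, map_mul, map_pow, hπX, hπY, hπF, hπH1, hπH2]
  -- Step 4: every element of G has a normal form in the box
  have hMsurj : ∀ gg : G, ∃ v : NV, InBox p v ∧ Mf v = gg := by
    have hzero : InBox p (0, 0, 0, 0, 0) := ⟨hp0, hp0, hp0, hp0, hp0⟩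
    have hMone : Mf (0, 0, 0, 0, 0) = 1 := by simp [hMfdef, Nf]
    have hmulP : ∀ u v : G, (∃ a, InBox p a ∧ Mf a = u) → (∃ b, InBox p b ∧ Mf b = v) →
        ∃ c, InBox p c ∧ Mf c = u * v := by
      rintro u v ⟨a, ha, rfl⟩ ⟨b, hb, rfl⟩
      exact ⟨muV p a b, inBox_muV hp0 a b ha, (Nmul RG hp0 a b).symm⟩
    have hpowP : ∀ (u : G) (n : ℕ), (∃ a, InBox p a ∧ Mf a = u) →
        ∃ c, InBox p c ∧ Mf c = u ^ (n + 1) := by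
      intro u n hu
      induction n with
      | zero => simpa using hu
      | succ n ih => rw [pow_succ]; exact hmulP _ _ ih hu
    intro gg
    have hgg : gg ∈ Subgroup.closure {f1, f2, f0, h1, h2} := by rw [hgen]; trivial
    refine Subgroup.closure_induction ?_ ⟨_, hzero, hMone⟩ (fun u v _ _ hu hv => hmulP u v hu hv)
      ?_ hgg
    · intro u hu
      have hlt : (1 : ℕ) < p := hp1
      rcases hu with rfl | rfl | rfl | rfl | rfl
      · exact ⟨(1, 0, 0, 0, 0), ⟨hp1, hp0, hp0, hp0, hp0⟩, by simp [hMfdef, Nf]⟩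
      · exact ⟨(0, 1, 0, 0, 0), ⟨hp0, hp1, hp0, hp0, hp0⟩, by simp [hMfdef, Nf]⟩
      · exact ⟨(0, 0, 1, 0, 0), ⟨hp0, hp0, hp1, hp0, hp0⟩, by simp [hMfdef, Nf]⟩
      · exact ⟨(0, 0, 0, 1, 0), ⟨hp0, hp0, hp0, hp1, hp0⟩, by simp [hMfdef, Nf]⟩
      · exact ⟨(0, 0, 0, 0, 1), ⟨hp0, hp0, hp0, hp0, hp1⟩, by simp [hMfdef, Nf]⟩
    · intro u _ hu
      have hord : 0 < orderOf u := (orderOf_pos u)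
      rcases eq_or_lt_of_le (Nat.succ_le_of_lt hord) with h1' | h1'
      · -- orderOf u = 1, u = 1
        have : u = 1 := orderOf_eq_one_iff.mp h1'.symm
        rw [this, inv_one]
        exact ⟨_, hzero, hMone⟩
      · have hinv : u⁻¹ = u ^ (orderOf u - 1) := by
          apply inv_eq_of_mul_eq_one_right
          rw [← pow_succ', Nat.sub_add_cancel hord, pow_orderOf_eq_one]
        obtain ⟨m, hm⟩ : ∃ m, orderOf u - 1 = m + 1 := ⟨orderOf u - 2, by omega⟩
        rw [hinv, hm]
        exact hpowP u m hu
  -- Step 5: counting gives uniqueness of the normal forms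
  haveI : Fintype G := Fintype.ofFinite G
  let T : Type := Fin p × Fin p × Fin p × Fin p × Fin p
  let e' : T → G := fun t =>
    Mf ((t.1 : ℕ), (t.2.1 : ℕ), (t.2.2.1 : ℕ), (t.2.2.2.1 : ℕ), (t.2.2.2.2 : ℕ))
  have hsurj' : Function.Surjective e' := by
    intro gg
    obtain ⟨v, hb, hv⟩ := hMsurj gg
    exact ⟨(⟨v.1, hb.1⟩, ⟨v.2.1, hb.2.1⟩, ⟨v.2.2.1, hb.2.2.1⟩, ⟨v.2.2.2.1, hb.2.2.2.1⟩,
      ⟨v.2.2.2.2, hb.2.2.2.2⟩), hv⟩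
  have hbij : Function.Bijective e' := by
    rw [Fintype.bijective_iff_surjective_and_card]
    refine ⟨hsurj', ?_⟩
    have hT : Fintype.card T = p ^ 5 := by
      simp only [T, Fintype.card_prod, Fintype.card_fin]
      ring
    rw [hT, ← Nat.card_eq_fintype_card, hcard]
  have hinjV : ∀ u w : NV, InBox p u → InBox p w → Mf u = Mf w → u = w := by
    rintro ⟨ua, ub, uc, ud, ue⟩ ⟨wa, wb, wc, wd, we⟩ hu hw huw
    have h := hbij.1 (a₁ := (⟨ua, hu.1⟩, ⟨ub, hu.2.1⟩, ⟨uc, hu.2.2.1⟩,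
      ⟨ud, hu.2.2.2.1⟩, ⟨ue, hu.2.2.2.2⟩))
      (a₂ := (⟨wa, hw.1⟩, ⟨wb, hw.2.1⟩, ⟨wc, hw.2.2.1⟩,
      ⟨wd, hw.2.2.2.1⟩, ⟨we, hw.2.2.2.2⟩)) huw
    simp only [T, Prod.mk.injEq, Fin.mk.injEq] at h
    obtain ⟨e1, e2, e3, e4, e5⟩ := h
    simp_all
  -- Step 6: the splitting and the coboundary
  let Eqv : T ≃ G := Equiv.ofBijective e' hbij
  let vg : G → NV := fun gg => (((Eqv.symm gg).1 : ℕ), ((Eqv.symm gg).2.1 : ℕ),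
    ((Eqv.symm gg).2.2.1 : ℕ), ((Eqv.symm gg).2.2.2.1 : ℕ), ((Eqv.symm gg).2.2.2.2 : ℕ))
  have hvgbox : ∀ gg, InBox p (vg gg) :=
    fun gg => ⟨Fin.isLt _, Fin.isLt _, Fin.isLt _, Fin.isLt _, Fin.isLt _⟩
  have hMfvg : ∀ gg, Mf (vg gg) = gg := by
    intro gg
    show e' (Eqv.symm gg) = gg
    exact Eqv.apply_symm_apply gg
  let s : G → ExtT G := fun gg => Nfe (vg gg)
  have hssnd : ∀ gg, (s gg).snd = gg := by
    intro gg
    show π (s gg) = gg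
    rw [hπN, hMfvg]
  have hsmul : ∀ g h : G, s g * s h = s (g * h) := by
    intro g h
    show Nfe (vg g) * Nfe (vg h) = Nfe (vg (g * h))
    rw [hNfedef, Nmul RE hp0]
    congr 1
    apply hinjV _ _ (inBox_muV hp0 _ _ (hvgbox g)) (hvgbox (g * h))
    rw [hMfdef, ← Nmul RG hp0, ← hMfdef, hMfvg, hMfvg, hMfvg]
  refine ⟨fun gg => -(s gg).fst, ?_⟩
  intro g h
  have h1' := hsmul g h
  have h2' : (s g * s h).fst = (s g).fst + (s h).fst + f (s g).snd (s h).snd := by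
    rw [hmulE]
  have h3' := congrArg ExtT.fst h1'
  rw [h2', hssnd g, hssnd h] at h3'
  show f g h = -(s g).fst + -(s h).fst - -(s (g * h)).fst
  rw [← h3']
  abel
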